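/- arXiv:2503.11078 — 4 statements merged into one kernel-verified Lean document; each statement's English description precedes it below -/
import Mathlib

section
/- Fix x ∈ ℝ^d, let p : ℝ^d → ℝ be strictly positive with log∘p differentiable at x, let δ ∈ ℝ^{d×m} be such that δWᵀ is symmetric, and let C ∈ ℝ be arbitrary. Then the following vector identity holds in ℝ^d: s_{θ+δ}(x) − ∇log p(x) = s_θ(x) − ∇log p̂_δ(x). -/
open Matrix
open scoped RealInnerProductSpace

/-- The random-feature score model with linear activation:
`s_θ(x) = (1/m) · θ (Wᵀ x + Uᵀ e)`. -/
noncomputable def score (d m de : ℕ) (W : Matrix (Fin d) (Fin m) ℝ)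
    (U : Matrix (Fin de) (Fin m) ℝ) (e : Fin de → ℝ)
    (θ : Matrix (Fin d) (Fin m) ℝ) (x : EuclideanSpace ℝ (Fin d)) :
    EuclideanSpace ℝ (Fin d) :=
  (m : ℝ)⁻¹ • ((WithLp.equiv 2 _).symm (θ.mulVec (Wᵀ.mulVec x + Uᵀ.mulVec e)) :
    EuclideanSpace ℝ (Fin d))

/-- The tilting exponent `I(x, δ) = (1/(2m))·xᵀ(δWᵀ)x + (1/m)·xᵀ(δUᵀe) + C`. -/
noncomputable def tiltExp (d m de : ℕ) (W : Matrix (Fin d) (Fin m) ℝ)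
    (U : Matrix (Fin de) (Fin m) ℝ) (e : Fin de → ℝ)
    (δ : Matrix (Fin d) (Fin m) ℝ) (C : ℝ) (x : EuclideanSpace ℝ (Fin d)) : ℝ :=
  (2 * (m : ℝ))⁻¹ * ⟪x, ((WithLp.equiv 2 _).symm ((δ * Wᵀ).mulVec x) :
      EuclideanSpace ℝ (Fin d))⟫
    + (m : ℝ)⁻¹ * ⟪x, ((WithLp.equiv 2 _).symm (δ.mulVec (Uᵀ.mulVec e)) :
      EuclideanSpace ℝ (Fin d))⟫
    + C

/-- The perturbed density `p̂_δ(x) = e^{−I(x,δ)} · p(x)`. -/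
noncomputable def tiltedDensity (d m de : ℕ) (W : Matrix (Fin d) (Fin m) ℝ)
    (U : Matrix (Fin de) (Fin m) ℝ) (e : Fin de → ℝ)
    (δ : Matrix (Fin d) (Fin m) ℝ) (C : ℝ)
    (p : EuclideanSpace ℝ (Fin d) → ℝ) (x : EuclideanSpace ℝ (Fin d)) : ℝ :=
  Real.exp (-(tiltExp d m de W U e δ C x)) * p x

/-- For a strictly positive density `p` with `log ∘ p` differentiable at `x`,
a perturbation `δ` with `δWᵀ` symmetric, and any constant `C`, the vector identity
`s_{θ+δ}(x) − ∇ log p(x) = s_θ(x) − ∇ log p̂_δ(x)` holds in `ℝ^d`. -/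
theorem score_perturbation_identity (d m de : ℕ) (hd : 0 < d) (hm : 0 < m) (hde : 0 < de)
    (θ W : Matrix (Fin d) (Fin m) ℝ) (U : Matrix (Fin de) (Fin m) ℝ) (e : Fin de → ℝ)
    (p : EuclideanSpace ℝ (Fin d) → ℝ) (hp : ∀ y, 0 < p y)
    (x : EuclideanSpace ℝ (Fin d))
    (hlogp : DifferentiableAt ℝ (fun y => Real.log (p y)) x)
    (δ : Matrix (Fin d) (Fin m) ℝ) (hsym : (δ * Wᵀ).IsSymm) (C : ℝ) :
    score d m de W U e (θ + δ) x - gradient (fun y => Real.log (p y)) x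
      = score d m de W U e θ x
        - gradient (fun y => Real.log (tiltedDensity d m de W U e δ C p y)) x := by
  classical
  set M : Matrix (Fin d) (Fin d) ℝ := δ * Wᵀ with hM
  set L : EuclideanSpace ℝ (Fin d) →L[ℝ] EuclideanSpace ℝ (Fin d) :=
    LinearMap.toContinuousLinearMap (Matrix.toEuclideanLin M) with hL
  set b : EuclideanSpace ℝ (Fin d) :=
    (WithLp.equiv 2 (Fin d → ℝ)).symm (δ.mulVec (Uᵀ.mulVec e)) with hb
  -- symmetry of `L`
  have hkey : ∀ u v : EuclideanSpace ℝ (Fin d), ⟪u, L v⟫ = ⟪L u, v⟫ := by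
    intro u v
    have h1 : ⟪u, L v⟫ = (WithLp.equiv 2 _ u) ⬝ᵥ (M *ᵥ WithLp.equiv 2 _ v) := by
      simp [hL, PiLp.inner_apply, Matrix.toEuclideanLin_apply, dotProduct, mul_comm]
    have h2 : ⟪L u, v⟫ = (M *ᵥ WithLp.equiv 2 _ u) ⬝ᵥ (WithLp.equiv 2 _ v) := by
      simp [hL, PiLp.inner_apply, Matrix.toEuclideanLin_apply, dotProduct, mul_comm]
    rw [h1, h2, Matrix.dotProduct_mulVec, ← Matrix.mulVec_transpose, hsym.eq]
  -- the gradient of `tiltExp`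
  set v : EuclideanSpace ℝ (Fin d) := (m : ℝ)⁻¹ • (L x) + (m : ℝ)⁻¹ • b with hv
  have htilt : HasGradientAt (tiltExp d m de W U e δ C) v x := by
    rw [hasGradientAt_iff_hasFDerivAt]
    have h1 : HasFDerivAt (fun y : EuclideanSpace ℝ (Fin d) => ⟪y, L y⟫)
        ((fderivInnerCLM ℝ (x, L x)).comp
          ((ContinuousLinearMap.id ℝ _).prod L)) x :=
      (hasFDerivAt_id x).inner ℝ (L.hasFDerivAt)
    have h2 : HasFDerivAt (fun y : EuclideanSpace ℝ (Fin d) => ⟪y, b⟫)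
        ((fderivInnerCLM ℝ (x, b)).comp
          ((ContinuousLinearMap.id ℝ _).prod (0 : EuclideanSpace ℝ (Fin d) →L[ℝ] _))) x :=
      (hasFDerivAt_id x).inner ℝ (hasFDerivAt_const b x)
    have h3 : HasFDerivAt (tiltExp d m de W U e δ C)
        ((2 * (m:ℝ))⁻¹ • ((fderivInnerCLM ℝ (x, L x)).comp
            ((ContinuousLinearMap.id ℝ _).prod L))
          + (m:ℝ)⁻¹ • ((fderivInnerCLM ℝ (x, b)).comp
            ((ContinuousLinearMap.id ℝ _).prod (0 : EuclideanSpace ℝ (Fin d) →L[ℝ] _)))) x := by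
      have : tiltExp d m de W U e δ C = fun y : EuclideanSpace ℝ (Fin d) =>
          (2 * (m:ℝ))⁻¹ * ⟪y, L y⟫ + (m:ℝ)⁻¹ * ⟪y, b⟫ + C := by
        funext y; rfl
      rw [this]
      exact ((h1.const_mul _).add (h2.const_mul _)).add_const C
    refine h3.congr_fderiv ?_
    ext h
    simp only [hv, ContinuousLinearMap.add_apply, ContinuousLinearMap.coe_smul',
      Pi.smul_apply, ContinuousLinearMap.coe_comp', Function.comp_apply,
      ContinuousLinearMap.prod_apply, ContinuousLinearMap.coe_id', id_eq,
      fderivInnerCLM_apply, ContinuousLinearMap.zero_apply, inner_zero_right,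
      add_zero, InnerProductSpace.toDual_apply_apply, inner_add_left, inner_smul_left,
      map_inv₀, RCLike.conj_to_real]
    rw [hkey x h, real_inner_comm (L x) h, real_inner_comm b h]
    have hm' : (m : ℝ) ≠ 0 := Nat.cast_ne_zero.mpr hm.ne'
    field_simp
    simp only [smul_eq_mul, zero_add]
    field_simp
    ring
  -- gradient of the log of the tilted density
  set G : EuclideanSpace ℝ (Fin d) := gradient (fun y => Real.log (p y)) x with hG
  have hGp : HasGradientAt (fun y => Real.log (p y)) G x :=
    hlogp.hasGradientAt
  have hlogt : HasGradientAt (fun y => Real.log (tiltedDensity d m de W U e δ C p y))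
      (-v + G) x := by
    have heq : (fun y => Real.log (tiltedDensity d m de W U e δ C p y))
        = fun y => -(tiltExp d m de W U e δ C y) + Real.log (p y) := by
      funext y
      rw [tiltedDensity, Real.log_mul (Real.exp_ne_zero _) (hp y).ne', Real.log_exp]
    rw [heq, hasGradientAt_iff_hasFDerivAt, map_add, map_neg]
    exact (htilt.hasFDerivAt.neg).add hGp.hasFDerivAt
  rw [hlogt.gradient]
  -- final algebra
  have hscore : score d m de W U e (θ + δ) x - score d m de W U e θ x = v := by
    refine PiLp.ext fun i => ?_
    simp only [score, hv, hb, hL, hM, LinearMap.coe_toContinuousLinearMap',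
      Matrix.toEuclideanLin_apply, PiLp.sub_apply, PiLp.add_apply, PiLp.smul_apply,
      smul_eq_mul, WithLp.equiv_symm_apply, PiLp.toLp_apply, Matrix.add_mulVec, Matrix.mulVec_add,
      Matrix.mulVec_mulVec, Pi.add_apply, Matrix.add_mul,
      show (WithLp.equiv 2 (Fin d → ℝ)) x = x from rfl]
    ring
  rw [sub_eq_sub_iff_sub_eq_sub, hscore]
  abel
end

section
/- (Theorem 1: A perturbed distribution.) Fix x ∈ ℝ^d, let p : ℝ^d → ℝ be strictly positive with log∘p differentiable at x, let δ ∈ ℝ^{d×m} be such that δWᵀ is symmetric, and let C ∈ ℝ be arbitrary. Then the perturbed density p̂_δ(x) = e^{−I(x,δ)}·p(x) satisfies the loss equality L(x; θ+δ, p) = L(x; θ, p̂_δ); that is, ‖s_{θ+δ}(x) − ∇log p(x)‖₂² = ‖s_θ(x) − ∇log p̂_δ(x)‖₂². -/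
open Matrix
open scoped RealInnerProductSpace

/-- The score-matching loss at `x`: `L(x; θ, p) = ‖s_θ(x) − ∇ log p(x)‖₂²`. -/
noncomputable def smLoss (d m de : ℕ) (W : Matrix (Fin d) (Fin m) ℝ)
    (U : Matrix (Fin de) (Fin m) ℝ) (e : Fin de → ℝ)
    (θ : Matrix (Fin d) (Fin m) ℝ) (p : EuclideanSpace ℝ (Fin d) → ℝ)
    (x : EuclideanSpace ℝ (Fin d)) : ℝ :=
  ‖score d m de W U e θ x - gradient (fun y => Real.log (p y)) x‖ ^ 2

section Aux

variable {d : ℕ}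

local notation "E" => EuclideanSpace ℝ (Fin d)

/-- gradient of the tilting exponent type expression -/
lemma hasGradientAt_quadratic (M : Matrix (Fin d) (Fin d) ℝ) (hM : M.IsSymm)
    (v : E) (c1 c2 C : ℝ) (x : E) :
    HasGradientAt (fun y : E =>
        c1 * ⟪y, ((WithLp.equiv 2 _).symm (M.mulVec y) : E)⟫
          + c2 * ⟪y, v⟫ + C)
      ((2 * c1) • ((WithLp.equiv 2 _).symm (M.mulVec x) : E) + c2 • v) x := by
  have hherm : M.IsHermitian := by
    rw [Matrix.IsHermitian, Matrix.conjTranspose_eq_transpose_of_trivial]; exact hM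
  have hsymlin := (Matrix.isHermitian_iff_isSymmetric.mp hherm)
  set A := Matrix.toEuclideanCLM (𝕜 := ℝ) (n := Fin d) M with hA
  have hAapp : ∀ y : E, A y = (WithLp.equiv 2 _).symm (M.mulVec ((WithLp.equiv 2 _) y)) := by
    intro y
    have := Matrix.toEuclideanCLM_toLp (𝕜 := ℝ) M ((WithLp.equiv 2 _) y)
    simpa using this
  have hAsym : ∀ y z : E, ⟪y, A z⟫ = ⟪A y, z⟫ := by
    intro y z
    have : (Matrix.toEuclideanLin M).IsSymmetric := hsymlin
    have h2 := (this y z).symm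
    simpa [← Matrix.coe_toEuclideanCLM_eq_toEuclideanLin, hA] using h2
  -- rewrite the function in terms of A
  have hfun : (fun y : E =>
        c1 * ⟪y, ((WithLp.equiv 2 _).symm (M.mulVec y) : E)⟫ + c2 * ⟪y, v⟫ + C)
      = fun y : E => c1 * ⟪y, A y⟫ + c2 * ⟪y, v⟫ + C := by
    funext y; rw [hAapp y]; rfl
  rw [hfun]
  rw [hasGradientAt_iff_hasFDerivAt]
  have h1 : HasFDerivAt (fun y : E => ⟪y, A y⟫)
      ((fderivInnerCLM ℝ (x, A x)).comp ((ContinuousLinearMap.id ℝ E).prod A)) x :=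
    (hasFDerivAt_id x).inner ℝ (A.hasFDerivAt)
  have h2 : HasFDerivAt (fun y : E => ⟪y, v⟫) ((innerSL ℝ) v) x := by
    have := ((innerSL ℝ) v).hasFDerivAt (x := x)
    apply this.congr_of_eventuallyEq
    filter_upwards with y using (real_inner_comm y v ▸ rfl)
  have h3 := ((h1.const_mul c1).add (h2.const_mul c2)).add_const C
  refine h3.congr_fderiv ?_
  ext h
  simp only [InnerProductSpace.toDual_apply_apply, ContinuousLinearMap.add_apply,
    ContinuousLinearMap.coe_comp', Function.comp_apply, ContinuousLinearMap.prod_apply,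
    ContinuousLinearMap.coe_id', id_eq, fderivInnerCLM_apply, ContinuousLinearMap.coe_smul',
    Pi.smul_apply, smul_eq_mul, innerSL_apply_apply]
  rw [inner_add_left, real_inner_smul_left, real_inner_smul_left]
  have : ⟪x, A h⟫ = ⟪A x, h⟫ := hAsym x h
  rw [this, hAapp x, real_inner_comm h ((WithLp.equiv 2 (Fin d → ℝ)).symm (M *ᵥ (WithLp.equiv 2 (Fin d → ℝ)) x))]
  have hx : M *ᵥ (WithLp.equiv 2 (Fin d → ℝ)) x = M *ᵥ x := rfl
  rw [hx, real_inner_comm h ((WithLp.equiv 2 (Fin d → ℝ)).symm (M *ᵥ x))]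
  ring

end Aux

/-- **Theorem 1: a perturbed distribution.** For a strictly positive density `p`
with `log ∘ p` differentiable at `x`, a perturbation `δ` with `δWᵀ` symmetric, and any constant
`C`, the perturbed density `p̂_δ = e^{−I(·,δ)}·p` satisfies the loss equality
`L(x; θ+δ, p) = L(x; θ, p̂_δ)`. -/
theorem perturbed_distribution_loss_equality (d m de : ℕ) (hd : 0 < d) (hm : 0 < m)
    (hde : 0 < de)
    (θ W : Matrix (Fin d) (Fin m) ℝ) (U : Matrix (Fin de) (Fin m) ℝ) (e : Fin de → ℝ)
    (p : EuclideanSpace ℝ (Fin d) → ℝ) (hp : ∀ y, 0 < p y)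
    (x : EuclideanSpace ℝ (Fin d))
    (hlogp : DifferentiableAt ℝ (fun y => Real.log (p y)) x)
    (δ : Matrix (Fin d) (Fin m) ℝ) (hsym : (δ * Wᵀ).IsSymm) (C : ℝ) :
    smLoss d m de W U e (θ + δ) p x
      = smLoss d m de W U e θ (tiltedDensity d m de W U e δ C p) x := by
  classical
  set g : EuclideanSpace ℝ (Fin d) := (m : ℝ)⁻¹ • ((WithLp.equiv 2 _).symm (δ.mulVec (Wᵀ.mulVec x + Uᵀ.mulVec e)) : EuclideanSpace ℝ (Fin d))
    with hg
  -- gradient of tiltExp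
  have hI : HasGradientAt (tiltExp d m de W U e δ C) g x := by
    have h := hasGradientAt_quadratic (δ * Wᵀ) hsym
      ((WithLp.equiv 2 _).symm (δ.mulVec (Uᵀ.mulVec e)) : EuclideanSpace ℝ (Fin d))
      ((2 * (m : ℝ))⁻¹) ((m : ℝ)⁻¹) C x
    have hG : (2 * (2 * (m : ℝ))⁻¹) • ((WithLp.equiv 2 _).symm ((δ * Wᵀ).mulVec x) : EuclideanSpace ℝ (Fin d))
        + (m : ℝ)⁻¹ • ((WithLp.equiv 2 _).symm (δ.mulVec (Uᵀ.mulVec e)) : EuclideanSpace ℝ (Fin d)) = g := by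
      have hm' : (m : ℝ) ≠ 0 := Nat.cast_ne_zero.mpr hm.ne'
      have h2 : (2 * (2 * (m : ℝ))⁻¹) = (m : ℝ)⁻¹ := by
        field_simp
      rw [h2, hg, ← smul_add]
      congr 1
      rw [Matrix.mulVec_add, ← Matrix.mulVec_mulVec]
      rfl
    rw [hG] at h
    exact h
  -- gradient of log of tilted density
  have hlog : ∀ y : EuclideanSpace ℝ (Fin d), Real.log (tiltedDensity d m de W U e δ C p y)
      = -(tiltExp d m de W U e δ C y) + Real.log (p y) := by
    intro y
    rw [tiltedDensity, Real.log_mul (Real.exp_ne_zero _) (hp y).ne', Real.log_exp]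
  have hgradlogp : HasGradientAt (fun y => Real.log (p y))
      (gradient (fun y => Real.log (p y)) x) x := hlogp.hasGradientAt
  have htilt : HasGradientAt (fun y => Real.log (tiltedDensity d m de W U e δ C p y))
      (gradient (fun y => Real.log (p y)) x - g) x := by
    have h1 : HasGradientAt (fun y => -(tiltExp d m de W U e δ C y) + Real.log (p y))
        (gradient (fun y => Real.log (p y)) x - g) x := by
      rw [hasGradientAt_iff_hasFDerivAt]
      have := (hI.hasFDerivAt.neg).add hgradlogp.hasFDerivAt
      refine this.congr_fderiv ?_
      rw [sub_eq_neg_add, map_add, map_neg]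
    exact h1.congr_of_eventuallyEq (by filter_upwards with y using hlog y)
  have hgradtilt : gradient (fun y => Real.log (tiltedDensity d m de W U e δ C p y)) x
      = gradient (fun y => Real.log (p y)) x - g := htilt.gradient
  -- scores
  have hscore : score d m de W U e (θ + δ) x = score d m de W U e θ x + g := by
    rw [score, score, hg, Matrix.add_mulVec, ← smul_add]
    rfl
  rw [smLoss, smLoss, hgradtilt, hscore]
  congr 1
  abel
end

section
/- (Proposition 1: A link from Δ-flatness to the set of perturbed distributions.) Fix x ∈ ℝ^d, let p : ℝ^d → ℝ be strictly positive with log∘p differentiable at x, let Δ > 0 and l* ∈ ℝ. Assume θ* is Δ-flat at x for p in the following sense: for every δ ∈ ℝ^{d×m} with ‖δ‖₂ ≤ Δ and δWᵀ symmetric, L(x; θ*+δ, p) = l*. Then for every δ ∈ ℝ^{d×m} with ‖δ‖₂ ≤ Δ and δWᵀ symmetric, and for every choice of the constant C ∈ ℝ in I(·, δ), the perturbed density p̂_δ = e^{−I(·,δ)}·p satisfies L(x; θ*, p̂_δ) = l*. -/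
open Matrix
open scoped RealInnerProductSpace

/-- The Frobenius norm `‖δ‖₂` of a matrix. -/
noncomputable def frobNorm (d m : ℕ) (δ : Matrix (Fin d) (Fin m) ℝ) : ℝ :=
  Real.sqrt (∑ i, ∑ j, δ i j ^ 2)


section Helpers
variable {d : ℕ}

noncomputable def mclm (A : Matrix (Fin d) (Fin d) ℝ) :
    EuclideanSpace ℝ (Fin d) →L[ℝ] EuclideanSpace ℝ (Fin d) :=
  (Matrix.toEuclideanLin A).toContinuousLinearMap

lemma mclm_apply (A : Matrix (Fin d) (Fin d) ℝ) (v : EuclideanSpace ℝ (Fin d)) :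
    mclm A v = (WithLp.equiv 2 _).symm (A.mulVec ((WithLp.equiv 2 _) v)) := rfl

lemma inner_euc (u v : EuclideanSpace ℝ (Fin d)) :
    ⟪u, v⟫ = (WithLp.equiv 2 _ u) ⬝ᵥ (WithLp.equiv 2 _ v) := by
  simp [PiLp.inner_apply, dotProduct, mul_comm]

lemma inner_mclm_symm {A : Matrix (Fin d) (Fin d) ℝ} (hA : A.IsSymm)
    (u v : EuclideanSpace ℝ (Fin d)) : ⟪u, mclm A v⟫ = ⟪mclm A u, v⟫ := by
  rw [inner_euc, inner_euc, mclm_apply, mclm_apply]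
  rw [show (WithLp.equiv 2 (Fin d → ℝ)) ((WithLp.equiv 2 (Fin d → ℝ)).symm (A.mulVec (WithLp.equiv 2 _ v))) = A.mulVec (WithLp.equiv 2 _ v) from rfl]
  rw [show (WithLp.equiv 2 (Fin d → ℝ)) ((WithLp.equiv 2 (Fin d → ℝ)).symm (A.mulVec (WithLp.equiv 2 _ u))) = A.mulVec (WithLp.equiv 2 _ u) from rfl]
  rw [Matrix.dotProduct_mulVec, ← Matrix.mulVec_transpose, hA.eq]

noncomputable def tE (m : ℕ) (A : Matrix (Fin d) (Fin d) ℝ)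
    (v : EuclideanSpace ℝ (Fin d)) (C : ℝ) (x : EuclideanSpace ℝ (Fin d)) : ℝ :=
  (2 * (m : ℝ))⁻¹ * ⟪x, mclm A x⟫ + (m : ℝ)⁻¹ * ⟪x, v⟫ + C

lemma hasGradientAt_tE (m : ℕ) {A : Matrix (Fin d) (Fin d) ℝ} (hA : A.IsSymm)
    (v : EuclideanSpace ℝ (Fin d)) (C : ℝ) (x : EuclideanSpace ℝ (Fin d)) :
    HasGradientAt (tE m A v C) ((m : ℝ)⁻¹ • (mclm A x + v)) x := by
  rw [hasGradientAt_iff_hasFDerivAt]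
  have h1 : HasFDerivAt (fun y : EuclideanSpace ℝ (Fin d) => ⟪y, mclm A y⟫)
      ((fderivInnerCLM ℝ (x, mclm A x)).comp ((ContinuousLinearMap.id ℝ _).prod (mclm A))) x :=
    (hasFDerivAt_id x).inner ℝ ((mclm A).hasFDerivAt)
  have h2 : HasFDerivAt (fun y : EuclideanSpace ℝ (Fin d) => ⟪y, v⟫)
      ((fderivInnerCLM ℝ (x, v)).comp ((ContinuousLinearMap.id ℝ _).prod (0 : EuclideanSpace ℝ (Fin d) →L[ℝ] EuclideanSpace ℝ (Fin d)))) x :=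
    (hasFDerivAt_id x).inner ℝ (hasFDerivAt_const v x)
  have h3 := ((h1.const_mul ((2 * (m : ℝ))⁻¹)).add (h2.const_mul ((m : ℝ)⁻¹))).add_const C
  refine h3.congr_fderiv ?_
  ext h
  simp only [ContinuousLinearMap.add_apply, ContinuousLinearMap.smul_apply,
    ContinuousLinearMap.coe_comp', Function.comp_apply, ContinuousLinearMap.prod_apply,
    ContinuousLinearMap.coe_id', id_eq, ContinuousLinearMap.zero_apply,
    fderivInnerCLM_apply, InnerProductSpace.toDual_apply_apply]
  rw [inner_mclm_symm hA x h, inner_zero_right, real_inner_smul_left, inner_add_left]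
  simp only [smul_eq_mul, zero_add, real_inner_comm h]
  rw [mul_inv]; ring

lemma hga_neg {f : EuclideanSpace ℝ (Fin d) → ℝ} {g x : EuclideanSpace ℝ (Fin d)}
    (h : HasGradientAt f g x) : HasGradientAt (fun y => -(f y)) (-g) x := by
  rw [hasGradientAt_iff_hasFDerivAt] at h ⊢
  rw [map_neg]; exact h.neg

lemma hga_add {f₁ f₂ : EuclideanSpace ℝ (Fin d) → ℝ} {g₁ g₂ x : EuclideanSpace ℝ (Fin d)}
    (h₁ : HasGradientAt f₁ g₁ x) (h₂ : HasGradientAt f₂ g₂ x) :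
    HasGradientAt (fun y => f₁ y + f₂ y) (g₁ + g₂) x := by
  rw [hasGradientAt_iff_hasFDerivAt] at h₁ h₂ ⊢
  rw [map_add]; exact h₁.add h₂

end Helpers

/-- **Proposition 1: from Δ-flatness to the set of perturbed distributions.**
If `θ*` is `Δ`-flat at `x` for `p` (i.e. `L(x; θ*+δ, p) = l*` for every `δ` with `‖δ‖₂ ≤ Δ`
and `δWᵀ` symmetric), then for every such `δ` and every choice of the constant `C`, the
perturbed density `p̂_δ = e^{−I(·,δ)}·p` satisfies `L(x; θ*, p̂_δ) = l*`. -/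
theorem flat_minimum_flat_on_perturbed_distributions (d m de : ℕ) (hd : 0 < d) (hm : 0 < m)
    (hde : 0 < de)
    (θs W : Matrix (Fin d) (Fin m) ℝ) (U : Matrix (Fin de) (Fin m) ℝ) (e : Fin de → ℝ)
    (p : EuclideanSpace ℝ (Fin d) → ℝ) (hp : ∀ y, 0 < p y)
    (x : EuclideanSpace ℝ (Fin d))
    (hlogp : DifferentiableAt ℝ (fun y => Real.log (p y)) x)
    (Δ : ℝ) (hΔ : 0 < Δ) (lstar : ℝ)
    (hflat : ∀ δ : Matrix (Fin d) (Fin m) ℝ, frobNorm d m δ ≤ Δ → (δ * Wᵀ).IsSymm →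
      smLoss d m de W U e (θs + δ) p x = lstar) :
    ∀ δ : Matrix (Fin d) (Fin m) ℝ, frobNorm d m δ ≤ Δ → (δ * Wᵀ).IsSymm →
      ∀ C : ℝ, smLoss d m de W U e θs (tiltedDensity d m de W U e δ C p) x = lstar := by
  intro δ hδn hδs C
  set A := δ * Wᵀ with hA
  set v : EuclideanSpace ℝ (Fin d) := (WithLp.equiv 2 _).symm (δ.mulVec (Uᵀ.mulVec e)) with hv
  set g : EuclideanSpace ℝ (Fin d) := (m : ℝ)⁻¹ • (mclm A x + v) with hg
  -- the tilting exponent is `tE`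
  have htE : tiltExp d m de W U e δ C = tE m A v C := rfl
  -- score shift
  have hscore : score d m de W U e (θs + δ) x = score d m de W U e θs x + g := by
    rw [hg, hv]
    simp only [score, mclm_apply, Matrix.add_mulVec, Matrix.mulVec_add,
      ← Matrix.mulVec_mulVec, WithLp.equiv_symm_apply, WithLp.toLp_add, smul_add, hA]
    rw [show (WithLp.equiv 2 (Fin d → ℝ)) x = x from rfl]
    abel
  -- log of the tilted density
  have hlog : (fun y => Real.log (tiltedDensity d m de W U e δ C p y))
      = fun y => -(tE m A v C y) + Real.log (p y) := by
    funext y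
    rw [tiltedDensity, Real.log_mul (Real.exp_ne_zero _) (hp y).ne', Real.log_exp, htE]
  -- gradient of the tilted log-density
  have hgrad : gradient (fun y => Real.log (tiltedDensity d m de W U e δ C p y)) x
      = -g + gradient (fun y => Real.log (p y)) x := by
    rw [hlog]
    exact (hga_add (hga_neg (hasGradientAt_tE m hδs v C x))
      hlogp.hasGradientAt).gradient
  have := hflat δ hδn hδs
  rw [smLoss] at this ⊢
  rw [hgrad, hscore] at *
  rw [show score d m de W U e θs x - (-g + gradient (fun y => Real.log (p y)) x)
      = score d m de W U e θs x + g - gradient (fun y => Real.log (p y)) x by abel]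
  exact this
end

section
/- (Theorem 2: A link from Δ-flatness to ℰ-distribution-gap robustness.) Fix x ∈ ℝ^d, let p : ℝ^d → ℝ be strictly positive with log∘p differentiable at x, let Δ > 0 and l* ∈ ℝ, and fix for each admissible δ a constant C_δ ∈ ℝ. Assume θ* is Δ-flat at x for p: for every δ ∈ ℝ^{d×m} with ‖δ‖₂ ≤ Δ and δWᵀ symmetric, L(x; θ*+δ, p) = l*. Then every perturbed density p̂_δ = e^{−I(·,δ)}·p with ‖δ‖₂ ≤ Δ and δWᵀ symmetric satisfies both L(x; θ*, p̂_δ) = l* and D(p‖p̂_δ) ≤ sup{ D(p‖p̂_{δ'}) : ‖δ'‖₂ ≤ Δ, δ'Wᵀ symmetric }; that is, θ* is ℰ-distribution-gap robust on the set of perturbed distributions with ℰ bounded above by the maximal divergence over that set. -/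
open Matrix
open scoped RealInnerProductSpace

open MeasureTheory

/-- The Kullback–Leibler divergence `D(p‖q) = ∫ p(x)·log(p(x)/q(x)) dx` between two densities
on `ℝ^d`, with respect to Lebesgue measure. -/
noncomputable def klDiv (d : ℕ) (p q : EuclideanSpace ℝ (Fin d) → ℝ) : ℝ :=
  ∫ x : EuclideanSpace ℝ (Fin d), p x * Real.log (p x / q x)

/-- **Theorem 2: from Δ-flatness to ℰ-distribution-gap robustness.**
Suppose `θ*` is `Δ`-flat at `x` for `p`: `L(x; θ*+δ, p) = l*` for every `δ` with `‖δ‖₂ ≤ Δ`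
and `δWᵀ` symmetric. Then every perturbed density `p̂_δ = e^{−I(·,δ)}·p` (with `‖δ‖₂ ≤ Δ`,
`δWᵀ` symmetric, and per-δ constant `C_δ`) satisfies both `L(x; θ*, p̂_δ) = l*` and
`D(p‖p̂_δ) ≤ sup { D(p‖p̂_{δ'}) : ‖δ'‖₂ ≤ Δ, δ'Wᵀ symmetric }`, the supremum taken in the
extended reals. -/
theorem flat_minimum_distribution_gap_robust (d m de : ℕ) (hd : 0 < d) (hm : 0 < m)
    (hde : 0 < de)
    (θs W : Matrix (Fin d) (Fin m) ℝ) (U : Matrix (Fin de) (Fin m) ℝ) (e : Fin de → ℝ)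
    (p : EuclideanSpace ℝ (Fin d) → ℝ) (hp : ∀ y, 0 < p y)
    (x : EuclideanSpace ℝ (Fin d))
    (hlogp : DifferentiableAt ℝ (fun y => Real.log (p y)) x)
    (Δ : ℝ) (hΔ : 0 < Δ) (lstar : ℝ)
    (C : Matrix (Fin d) (Fin m) ℝ → ℝ)
    (hflat : ∀ δ : Matrix (Fin d) (Fin m) ℝ, frobNorm d m δ ≤ Δ → (δ * Wᵀ).IsSymm →
      smLoss d m de W U e (θs + δ) p x = lstar) :
    ∀ δ : Matrix (Fin d) (Fin m) ℝ, frobNorm d m δ ≤ Δ → (δ * Wᵀ).IsSymm →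
      smLoss d m de W U e θs (tiltedDensity d m de W U e δ (C δ) p) x = lstar ∧
      (↑(klDiv d p (tiltedDensity d m de W U e δ (C δ) p)) : EReal)
        ≤ ⨆ (δ' : Matrix (Fin d) (Fin m) ℝ)
            (_ : frobNorm d m δ' ≤ Δ ∧ (δ' * Wᵀ).IsSymm),
            (↑(klDiv d p (tiltedDensity d m de W U e δ' (C δ') p)) : EReal) := by

  intro δ hδ hsymm
  refine ⟨?_, le_iSup_of_le δ (le_iSup_of_le ⟨hδ, hsymm⟩ le_rfl)⟩
  -- setup
  have hm0 : (m : ℝ) ≠ 0 := Nat.cast_ne_zero.mpr hm.ne'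
  set A : Matrix (Fin d) (Fin d) ℝ := δ * Wᵀ with hAdef
  set Tc : EuclideanSpace ℝ (Fin d) →L[ℝ] EuclideanSpace ℝ (Fin d) :=
    LinearMap.toContinuousLinearMap (Matrix.toEuclideanLin (𝕜 := ℝ) A) with hTcdef
  have hTc : ∀ y : EuclideanSpace ℝ (Fin d),
      Tc y = (WithLp.equiv 2 _).symm (A.mulVec y) := by
    intro y
    simp [hTcdef, Matrix.toEuclideanLin_apply]
  set b : EuclideanSpace ℝ (Fin d) :=
    (WithLp.equiv 2 _).symm (δ.mulVec (Uᵀ.mulVec e)) with hbdef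
  set v : EuclideanSpace ℝ (Fin d) := (m : ℝ)⁻¹ • (Tc x + b) with hvdef
  -- symmetry of Tc
  have hherm : A.IsHermitian := by
    rwa [Matrix.IsHermitian, Matrix.conjTranspose_eq_transpose_of_trivial]
  have hTsym : ∀ y z : EuclideanSpace ℝ (Fin d), ⟪Tc y, z⟫ = ⟪y, Tc z⟫ := by
    intro y z
    exact Matrix.isHermitian_iff_isSymmetric.1 hherm y z
  -- derivative of tiltExp
  have hq1 : HasFDerivAt (fun y : EuclideanSpace ℝ (Fin d) => ⟪y, Tc y⟫)
      ((fderivInnerCLM ℝ (x, Tc x)).comp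
        ((ContinuousLinearMap.id ℝ _).prod Tc)) x :=
    (hasFDerivAt_id x).inner ℝ (Tc.hasFDerivAt)
  have hq2 : HasFDerivAt (fun y : EuclideanSpace ℝ (Fin d) => ⟪y, b⟫)
      ((fderivInnerCLM ℝ (x, b)).comp
        ((ContinuousLinearMap.id ℝ _).prod (0 : EuclideanSpace ℝ (Fin d) →L[ℝ] _))) x :=
    (hasFDerivAt_id x).inner ℝ (hasFDerivAt_const b x)
  have hIfun : (fun y => tiltExp d m de W U e δ (C δ) y)
      = fun y : EuclideanSpace ℝ (Fin d) =>
        (2 * (m : ℝ))⁻¹ * ⟪y, Tc y⟫ + (m : ℝ)⁻¹ * ⟪y, b⟫ + C δ := by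
    funext y
    rw [hTc y]
    rfl
  have hI : HasFDerivAt (fun y => tiltExp d m de W U e δ (C δ) y)
      ((2 * (m : ℝ))⁻¹ • ((fderivInnerCLM ℝ (x, Tc x)).comp
          ((ContinuousLinearMap.id ℝ _).prod Tc))
        + (m : ℝ)⁻¹ • ((fderivInnerCLM ℝ (x, b)).comp
          ((ContinuousLinearMap.id ℝ _).prod (0 : EuclideanSpace ℝ (Fin d) →L[ℝ] _)))) x := by
    rw [hIfun]
    exact ((hq1.const_mul _).add (hq2.const_mul _)).add_const _
  have hΦeq : ((2 * (m : ℝ))⁻¹ • ((fderivInnerCLM ℝ (x, Tc x)).comp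
          ((ContinuousLinearMap.id ℝ _).prod Tc))
        + (m : ℝ)⁻¹ • ((fderivInnerCLM ℝ (x, b)).comp
          ((ContinuousLinearMap.id ℝ _).prod (0 : EuclideanSpace ℝ (Fin d) →L[ℝ] _))))
      = InnerProductSpace.toDual ℝ (EuclideanSpace ℝ (Fin d)) v := by
    ext w
    simp only [ContinuousLinearMap.add_apply, ContinuousLinearMap.smul_apply,
      ContinuousLinearMap.comp_apply, ContinuousLinearMap.prod_apply,
      ContinuousLinearMap.id_apply, ContinuousLinearMap.zero_apply,
      fderivInnerCLM_apply, InnerProductSpace.toDual_apply_apply, smul_eq_mul]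
    have h1 : ⟪x, Tc w⟫ = ⟪Tc x, w⟫ := (hTsym x w).symm
    have h2 : ⟪w, Tc x⟫ = ⟪Tc x, w⟫ := real_inner_comm _ _
    have h3 : ⟪x, (0 : EuclideanSpace ℝ (Fin d))⟫ = 0 := inner_zero_right x
    have h4 : ⟪w, b⟫ = ⟪b, w⟫ := real_inner_comm _ _
    rw [h1, h2, h3, h4, hvdef, real_inner_smul_left, inner_add_left]
    field_simp
    ring
  have hGradI : HasGradientAt (fun y => tiltExp d m de W U e δ (C δ) y) v x := by
    rw [hasGradientAt_iff_hasFDerivAt]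
    rw [← hΦeq]
    exact hI
  -- gradient of log of tilted density
  have hg : HasGradientAt (fun y => Real.log (p y))
      (gradient (fun y => Real.log (p y)) x) x := hlogp.hasGradientAt
  have hlogfun : (fun y => Real.log (tiltedDensity d m de W U e δ (C δ) p y))
      = fun y => Real.log (p y) - tiltExp d m de W U e δ (C δ) y := by
    funext y
    rw [tiltedDensity, Real.log_mul (Real.exp_ne_zero _) (hp y).ne', Real.log_exp]
    ring
  have hGradTilt : HasGradientAt
      (fun y => Real.log (tiltedDensity d m de W U e δ (C δ) p y))
      (gradient (fun y => Real.log (p y)) x - v) x := by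
    rw [hlogfun, hasGradientAt_iff_hasFDerivAt, map_sub]
    exact (hasGradientAt_iff_hasFDerivAt.1 hg).sub (hasGradientAt_iff_hasFDerivAt.1 hGradI)
  have hgradval : gradient (fun y => Real.log (tiltedDensity d m de W U e δ (C δ) p y)) x
      = gradient (fun y => Real.log (p y)) x - v := hGradTilt.gradient
  -- score shift
  have hscore : score d m de W U e (θs + δ) x = score d m de W U e θs x + v := by
    rw [score, score, hvdef, hTc x, hbdef, Matrix.add_mulVec, ← smul_add]
    congr 1
    have : δ *ᵥ (Wᵀ *ᵥ x + Uᵀ *ᵥ e) = A *ᵥ x + δ *ᵥ (Uᵀ *ᵥ e) := by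
      rw [Matrix.mulVec_add, hAdef, ← Matrix.mulVec_mulVec]
    rw [this]
    rfl
  -- conclude
  have := hflat δ hδ hsymm
  rw [smLoss] at this ⊢
  rw [hgradval, ← this, hscore]
  congr 2
  abel
end
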